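/- Let A be a commutative unital topological algebra over ℂ. If for each continuous seminorm p there exist a continuous seminorm q and s > 0 with ∑_{n≥1} s^n ‖π_n‖_{p,q} < ∞ (where π_n(x)=x^n), then A satisfies condition (*): for each continuous seminorm p there exist a continuous seminorm q and r > 0 with ∑_{n≥1} r^n ‖μ_n‖_{p,q} < ∞. -/

import Mathlib

/-!
STATEMENT 4: for a commutative unital topological ℂ-algebra, if for each continuous
seminorm `p` there are a continuous seminorm `q` and `s > 0` with
`∑_{n≥1} s^n ‖π_n‖_{p,q} < ∞`, then `A` satisfies condition (*):
for each continuous seminorm `p` there are a continuous seminorm `q` and `r > 0`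
with `∑_{n≥1} r^n ‖μ_n‖_{p,q} < ∞`.
-/

open scoped ENNReal

noncomputable def muNorm {𝕜 A : Type*} [NormedField 𝕜] [Ring A] [Module 𝕜 A]
    (p q : Seminorm 𝕜 A) (n : ℕ) : ℝ≥0∞ :=
  ⨆ x : {x : Fin n → A // ∀ i, q (x i) ≤ 1}, ENNReal.ofReal (p (List.ofFn x.1).prod)

noncomputable def piNorm {A : Type*} [CommRing A] [Algebra ℂ A]
    (p q : Seminorm ℂ A) (n : ℕ) : ℝ≥0∞ :=
  ⨆ x : {x : A // q x ≤ 1}, ENNReal.ofReal (p (x.1 ^ n))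

open Finset in
lemma key_count {n : ℕ} (g : Fin n → Fin n) :
    (∑ S ∈ (univ : Finset (Fin n)).powerset,
       if ∀ j, g j ∈ S then ((-1 : ℤ) ^ S.card) else 0)
      = if Function.Surjective g then ((-1 : ℤ) ^ n) else 0 := by
  classical
  set R := Finset.image g univ with hR
  rw [← Finset.sum_filter]
  have key : ∑ S ∈ (univ : Finset (Fin n)).powerset.filter (fun S => ∀ j, g j ∈ S),
      ((-1 : ℤ) ^ S.card)
      = ∑ T ∈ (Rᶜ).powerset, ((-1 : ℤ) ^ (R ∪ T).card) := by
    refine (Finset.sum_nbij' (fun T => R ∪ T) (fun S => S \ R) ?_ ?_ ?_ ?_ ?_).symm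
    · intro T hT
      simp only [Finset.mem_powerset] at hT
      simp only [Finset.mem_filter, Finset.mem_powerset]
      exact ⟨subset_univ _, fun j => mem_union_left _ (mem_image_of_mem g (mem_univ j))⟩
    · intro S hS
      simp only [Finset.mem_filter, Finset.mem_powerset] at hS
      simp only [Finset.mem_powerset]
      intro a ha
      simp only [Finset.mem_sdiff] at ha
      simpa [Finset.mem_compl] using ha.2
    · intro T hT
      simp only [Finset.mem_powerset] at hT
      apply Finset.union_sdiff_cancel_left
      refine Finset.disjoint_left.2 fun a haR haT => ?_
      have := hT haT
      simp only [Finset.mem_compl] at this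
      exact this haR
    · intro S hS
      simp only [Finset.mem_filter, Finset.mem_powerset] at hS
      have hRS : R ⊆ S := by
        intro a ha
        simp only [hR, Finset.mem_image] at ha
        obtain ⟨j, -, rfl⟩ := ha
        exact hS.2 j
      exact Finset.union_sdiff_of_subset hRS
    · intro T hT
      rfl
  rw [key]
  have hdisj : ∀ T ∈ (Rᶜ).powerset, (R ∪ T).card = R.card + T.card := by
    intro T hT
    simp only [mem_powerset] at hT
    refine Finset.card_union_of_disjoint ?_
    refine Finset.disjoint_left.2 fun a haR haT => ?_
    have := hT haT
    simp only [mem_compl] at this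
    exact this haR
  calc ∑ T ∈ (Rᶜ).powerset, ((-1 : ℤ) ^ (R ∪ T).card)
      = ∑ T ∈ (Rᶜ).powerset, ((-1 : ℤ) ^ R.card * (-1) ^ T.card) := by
        refine Finset.sum_congr rfl fun T hT => ?_
        rw [hdisj T hT, pow_add]
    _ = (-1 : ℤ) ^ R.card * ∑ T ∈ (Rᶜ).powerset, ((-1 : ℤ) ^ T.card) := by
        rw [Finset.mul_sum]
    _ = (-1 : ℤ) ^ R.card * (if Rᶜ = ∅ then 1 else 0) := by
        rw [Finset.sum_powerset_neg_one_pow_card]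
    _ = if Function.Surjective g then ((-1 : ℤ) ^ n) else 0 := by
        have hiff : Rᶜ = ∅ ↔ Function.Surjective g := by
          rw [Finset.compl_eq_empty_iff]
          constructor
          · intro h j
            have : j ∈ R := h ▸ mem_univ j
            simp only [hR, mem_image] at this
            obtain ⟨i, -, hi⟩ := this
            exact ⟨i, hi⟩
          · intro h
            refine Finset.eq_univ_of_forall fun j => ?_
            obtain ⟨i, rfl⟩ := h j
            exact mem_image_of_mem g (mem_univ i)
        by_cases hsurj : Function.Surjective g
        · rw [if_pos hsurj, if_pos (hiff.2 hsurj), mul_one]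
          congr 1
          have : R = univ := by
            have := hiff.2 hsurj
            rwa [Finset.compl_eq_empty_iff] at this
          rw [this, card_univ, Fintype.card_fin]
        · rw [if_neg hsurj, if_neg (fun h => hsurj (hiff.1 h)), mul_zero]

open Finset in
lemma polarization {A : Type*} [CommRing A] (n : ℕ) (x : Fin n → A) :
    ∑ S ∈ (univ : Finset (Fin n)).powerset, (-1 : ℤ) ^ S.card • (∑ i ∈ S, x i) ^ n
      = ((-1) ^ n * n.factorial : ℤ) • ∏ i, x i := by
  classical
  calc ∑ S ∈ (univ : Finset (Fin n)).powerset, (-1 : ℤ) ^ S.card • (∑ i ∈ S, x i) ^ n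
      = ∑ S ∈ (univ : Finset (Fin n)).powerset, ∑ g : Fin n → Fin n,
          (if ∀ j, g j ∈ S then ((-1 : ℤ) ^ S.card) else 0) • ∏ j, x (g j) := by
        refine Finset.sum_congr rfl fun S _ => ?_
        rw [Finset.sum_pow', Finset.smul_sum]
        rw [show Fintype.piFinset (fun _ : Fin n => S)
            = univ.filter (fun g : Fin n → Fin n => ∀ j, g j ∈ S) from by
          ext g; simp [Fintype.mem_piFinset]]
        rw [Finset.sum_filter]
        refine Finset.sum_congr rfl fun g _ => ?_
        split <;> simp
    _ = ∑ g : Fin n → Fin n, (∑ S ∈ (univ : Finset (Fin n)).powerset,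
          if ∀ j, g j ∈ S then ((-1 : ℤ) ^ S.card) else 0) • ∏ j, x (g j) := by
        rw [Finset.sum_comm]
        refine Finset.sum_congr rfl fun g _ => ?_
        rw [Finset.sum_smul]
    _ = ∑ g : Fin n → Fin n,
          (if Function.Surjective g then ((-1 : ℤ) ^ n) else 0) • ∏ j, x (g j) := by
        refine Finset.sum_congr rfl fun g _ => ?_
        rw [key_count]
    _ = ∑ g ∈ univ.filter (fun g : Fin n → Fin n => Function.Surjective g),
          ((-1 : ℤ) ^ n) • ∏ j, x (g j) := by
        rw [Finset.sum_filter]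
        refine Finset.sum_congr rfl fun g _ => ?_
        split <;> simp
    _ = (univ.filter (fun g : Fin n → Fin n => Function.Surjective g)).card •
          (((-1 : ℤ) ^ n) • ∏ i, x i) := by
        rw [← Finset.sum_const]
        refine Finset.sum_congr rfl fun g hg => ?_
        simp only [Finset.mem_filter] at hg
        congr 1
        exact Fintype.prod_bijective g (Finite.surjective_iff_bijective.mp hg.2)
          (fun j => x (g j)) x (fun j => rfl)
    _ = ((-1) ^ n * n.factorial : ℤ) • ∏ i, x i := by
        have hcard : (univ.filter (fun g : Fin n → Fin n => Function.Surjective g)).card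
            = n.factorial := by
          have e : {g : Fin n → Fin n // Function.Surjective g} ≃ Equiv.Perm (Fin n) :=
            { toFun := fun g => Equiv.ofBijective g.1 (Finite.surjective_iff_bijective.mp g.2)
              invFun := fun e => ⟨e, e.surjective⟩
              left_inv := fun g => Subtype.ext rfl
              right_inv := fun e => Equiv.ext fun x => rfl }
          rw [← Fintype.card_subtype, Fintype.card_congr e, Fintype.card_perm, Fintype.card_fin]
        rw [hcard, ← natCast_zsmul, smul_smul]
        congr 1
        ring

lemma pow_self_le_three_pow_mul_factorial (n : ℕ) :
    (n : ℝ) ^ n ≤ 3 ^ n * n.factorial := by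
  induction n with
  | zero => simp
  | succ n ih =>
    have h3 : ((n:ℝ) + 1) ^ n ≤ 3 * (n:ℝ) ^ n := by
      rcases Nat.eq_zero_or_pos n with rfl | hn
      · norm_num
      · have hn' : (0:ℝ) < n := by exact_mod_cast hn
        have h1 : ((n:ℝ) + 1) = n * (1 + 1/n) := by field_simp
        have h2 : (1 + 1/(n:ℝ)) ^ n ≤ 3 := by
          have hadd := Real.add_one_le_exp (1/(n:ℝ))
          have hle : (1 + 1/(n:ℝ)) ^ n ≤ Real.exp (1/n) ^ n := by
            apply pow_le_pow_left₀ (by positivity) (by linarith)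
          rw [← Real.exp_nat_mul] at hle
          have hmul : (n:ℝ) * (1/n) = 1 := by field_simp
          rw [hmul] at hle
          have := Real.exp_one_lt_d9
          have hexp3 : Real.exp 1 ≤ 3 := by linarith [Real.exp_one_lt_d9]
          calc (1 + 1/(n:ℝ)) ^ n ≤ Real.exp 1 := hle
            _ ≤ 3 := hexp3
        calc ((n:ℝ)+1)^n = (n:ℝ)^n * (1+1/n)^n := by rw [h1, mul_pow]
          _ ≤ (n:ℝ)^n * 3 := mul_le_mul_of_nonneg_left h2 (by positivity)
          _ = 3 * (n:ℝ)^n := by ring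
    calc ((n+1:ℕ):ℝ)^(n+1) = ((n:ℝ)+1)^n * ((n:ℝ)+1) := by push_cast; ring
      _ ≤ (3 * (n:ℝ)^n) * ((n:ℝ)+1) := mul_le_mul_of_nonneg_right h3 (by positivity)
      _ ≤ (3 * (3^n * n.factorial)) * ((n:ℝ)+1) := by
          apply mul_le_mul_of_nonneg_right
            (mul_le_mul_of_nonneg_left ih (by norm_num)) (by positivity)
      _ = 3^(n+1) * (((n:ℝ)+1) * n.factorial) := by ring
      _ = 3^(n+1) * (n+1).factorial := by rw [Nat.factorial_succ]; push_cast; ring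

open Finset in
lemma seminorm_sum_le {A : Type*} [AddCommGroup A] [Module ℂ A] (p : Seminorm ℂ A)
    {ι : Type*} (s : Finset ι) (f : ι → A) : p (∑ i ∈ s, f i) ≤ ∑ i ∈ s, p (f i) :=
  Finset.le_sum_of_subadditive p (map_zero p).le (fun a b => map_add_le_add p a b) s f

open Finset in
lemma real_bound {A : Type*} [CommRing A] [Algebra ℂ A] (p : Seminorm ℂ A)
    (n : ℕ) (hn : 0 < n) (x : Fin n → A) :
    (n.factorial : ℝ) * p (∏ i, x i) ≤
      ∑ S ∈ (univ : Finset (Fin n)).powerset,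
        (n:ℝ)^n * p ((((n:ℂ))⁻¹ • ∑ i ∈ S, x i) ^ n) := by
  classical
  have hn' : ((n:ℂ)) ≠ 0 := Nat.cast_ne_zero.mpr hn.ne'
  have hpol := polarization n x
  have hmain : (n.factorial : ℝ) * p (∏ i, x i)
      = p (∑ S ∈ (univ : Finset (Fin n)).powerset,
          (-1 : ℤ) ^ S.card • (∑ i ∈ S, x i) ^ n) := by
    rw [hpol, ← Int.cast_smul_eq_zsmul ℂ, map_smul_eq_mul]
    congr 1
    push_cast
    simp
  rw [hmain]
  refine le_trans (seminorm_sum_le p _ _) (Finset.sum_le_sum fun S _ => ?_)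
  have hexp : (∑ i ∈ S, x i) ^ n = ((n:ℂ))^n • ((((n:ℂ))⁻¹ • ∑ i ∈ S, x i) ^ n) := by
    rw [smul_pow, smul_smul, ← mul_pow, mul_inv_cancel₀ hn', one_pow, one_smul]
  rw [← Int.cast_smul_eq_zsmul ℂ, map_smul_eq_mul, hexp, map_smul_eq_mul]
  have h1 : ‖(((-1:ℤ)^S.card : ℤ) : ℂ)‖ = 1 := by push_cast; simp
  rw [h1, one_mul, norm_pow, Complex.norm_natCast]

open Finset in
lemma q_bound {A : Type*} [CommRing A] [Algebra ℂ A] (q : Seminorm ℂ A)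
    (n : ℕ) (hn : 0 < n) (x : Fin n → A) (hx : ∀ i, q (x i) ≤ 1)
    (S : Finset (Fin n)) : q (((n:ℂ))⁻¹ • ∑ i ∈ S, x i) ≤ 1 := by
  have hn' : (0:ℝ) < n := by exact_mod_cast hn
  rw [map_smul_eq_mul, norm_inv, Complex.norm_natCast]
  have hsum : q (∑ i ∈ S, x i) ≤ (n : ℝ) := by
    refine le_trans (seminorm_sum_le q _ _) ?_
    calc ∑ i ∈ S, q (x i) ≤ ∑ _i ∈ S, (1:ℝ) := Finset.sum_le_sum fun i _ => hx i
      _ = S.card := by simp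
      _ ≤ (n : ℝ) := by
          have := Finset.card_le_card (Finset.subset_univ S)
          simp only [card_univ, Fintype.card_fin] at this
          exact_mod_cast this
  calc ((n:ℝ))⁻¹ * q (∑ i ∈ S, x i) ≤ ((n:ℝ))⁻¹ * n :=
        mul_le_mul_of_nonneg_left hsum (by positivity)
    _ = 1 := inv_mul_cancel₀ hn'.ne'

open Finset in
lemma mu_le {A : Type*} [CommRing A] [Algebra ℂ A] (p q : Seminorm ℂ A)
    (n : ℕ) (hn : 0 < n) :
    muNorm p q n * ENNReal.ofReal (n.factorial) ≤
      ENNReal.ofReal (2^n * (n:ℝ)^n) * piNorm p q n := by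
  rw [muNorm, ENNReal.iSup_mul]
  refine iSup_le fun x => ?_
  obtain ⟨x, hx⟩ := x
  calc ENNReal.ofReal (p (List.ofFn x).prod) * ENNReal.ofReal (n.factorial : ℝ)
      = ENNReal.ofReal ((n.factorial : ℝ) * p (∏ i, x i)) := by
        rw [← ENNReal.ofReal_mul (apply_nonneg p _), List.prod_ofFn, mul_comm]
    _ ≤ ENNReal.ofReal (∑ S ∈ (univ : Finset (Fin n)).powerset,
          (n:ℝ)^n * p ((((n:ℂ))⁻¹ • ∑ i ∈ S, x i) ^ n)) :=
        ENNReal.ofReal_le_ofReal (real_bound p n hn x)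
    _ = ∑ S ∈ (univ : Finset (Fin n)).powerset,
          ENNReal.ofReal ((n:ℝ)^n * p ((((n:ℂ))⁻¹ • ∑ i ∈ S, x i) ^ n)) :=
        ENNReal.ofReal_sum_of_nonneg fun S _ => by positivity
    _ ≤ ∑ _S ∈ (univ : Finset (Fin n)).powerset,
          ENNReal.ofReal ((n:ℝ)^n) * piNorm p q n := by
        refine Finset.sum_le_sum fun S _ => ?_
        rw [ENNReal.ofReal_mul (by positivity)]
        refine mul_le_mul_right ?_ _
        exact le_iSup (fun y : {y : A // q y ≤ 1} => ENNReal.ofReal (p (y.1 ^ n)))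
          ⟨((n:ℂ))⁻¹ • ∑ i ∈ S, x i, q_bound q n hn x hx S⟩
    _ = ENNReal.ofReal (2^n * (n:ℝ)^n) * piNorm p q n := by
        rw [Finset.sum_const, Finset.card_powerset, card_univ, Fintype.card_fin]
        rw [nsmul_eq_mul, ← mul_assoc]
        congr 1
        rw [ENNReal.ofReal_mul (by positivity)]
        congr 1
        · rw [← ENNReal.ofReal_natCast (2^n)]
          congr 1
          push_cast
          ring

theorem stmt4 {A : Type*} [CommRing A] [Algebra ℂ A]
    [TopologicalSpace A] [IsTopologicalRing A] [ContinuousSMul ℂ A]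
    (hpi : ∀ p : Seminorm ℂ A, Continuous p → ∃ q : Seminorm ℂ A, Continuous q ∧
      ∃ s : ℝ, 0 < s ∧ (∑' n : ℕ, ENNReal.ofReal s ^ (n + 1) * piNorm p q (n + 1)) ≠ ⊤) :
    ∀ p : Seminorm ℂ A, Continuous p → ∃ q : Seminorm ℂ A, Continuous q ∧
      ∃ r : ℝ, 0 < r ∧ (∑' n : ℕ, ENNReal.ofReal r ^ (n + 1) * muNorm p q (n + 1)) ≠ ⊤ := by
  intro p hp
  obtain ⟨q, hq, s, hs, hsum⟩ := hpi p hp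
  refine ⟨q, hq, s/6, by positivity, ?_⟩
  have key : ∀ n : ℕ, ENNReal.ofReal (s/6) ^ (n+1) * muNorm p q (n+1)
      ≤ ENNReal.ofReal s ^ (n+1) * piNorm p q (n+1) := by
    intro n
    set m := n + 1 with hmdef
    have hm : 0 < m := Nat.succ_pos n
    have hfac0 : (ENNReal.ofReal (m.factorial : ℝ)) ≠ 0 := by
      refine (ENNReal.ofReal_pos.mpr ?_).ne'
      exact_mod_cast m.factorial_pos
    have hfact : (ENNReal.ofReal (m.factorial : ℝ)) ≠ ⊤ := ENNReal.ofReal_ne_top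
    rw [← ENNReal.mul_le_mul_iff_left hfac0 hfact]
    have hreal : (s/6)^m * (2^m * (m:ℝ)^m) ≤ s^m * m.factorial := by
      have h1 : (s/6)^m * 2^m = (s/3)^m := by
        rw [← mul_pow]; congr 1; ring
      have h2 : (s/3)^m * (m:ℝ)^m = s^m * ((m:ℝ)^m / 3^m) := by
        rw [div_pow]; ring
      calc (s/6)^m * (2^m * (m:ℝ)^m) = (s/3)^m * (m:ℝ)^m := by rw [← mul_assoc, h1]
        _ = s^m * ((m:ℝ)^m / 3^m) := h2
        _ ≤ s^m * m.factorial := by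
            refine mul_le_mul_of_nonneg_left ?_ (by positivity)
            rw [div_le_iff₀ (by positivity)]
            calc ((m:ℝ))^m ≤ 3^m * m.factorial := pow_self_le_three_pow_mul_factorial m
              _ = (m.factorial : ℝ) * 3^m := by ring
    calc ENNReal.ofReal (s/6) ^ m * muNorm p q m * ENNReal.ofReal (m.factorial : ℝ)
        = ENNReal.ofReal (s/6) ^ m * (muNorm p q m * ENNReal.ofReal (m.factorial : ℝ)) := by
          rw [mul_assoc]
      _ ≤ ENNReal.ofReal (s/6) ^ m * (ENNReal.ofReal (2^m * (m:ℝ)^m) * piNorm p q m) :=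
          mul_le_mul_right (mu_le p q m hm) _
      _ = (ENNReal.ofReal (s/6) ^ m * ENNReal.ofReal (2^m * (m:ℝ)^m)) * piNorm p q m := by
          rw [mul_assoc]
      _ = ENNReal.ofReal ((s/6)^m * (2^m * (m:ℝ)^m)) * piNorm p q m := by
          rw [← ENNReal.ofReal_pow (by positivity), ← ENNReal.ofReal_mul (by positivity)]
      _ ≤ ENNReal.ofReal (s^m * (m.factorial : ℝ)) * piNorm p q m :=
          mul_le_mul_left (ENNReal.ofReal_le_ofReal hreal) _
      _ = ENNReal.ofReal s ^ m * piNorm p q m * ENNReal.ofReal (m.factorial : ℝ) := by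
          rw [ENNReal.ofReal_mul (by positivity), ENNReal.ofReal_pow hs.le]
          ring
  exact ne_top_of_le_ne_top hsum (ENNReal.tsum_le_tsum key)
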